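/- Let p ≥ 5 be a prime. Let a_1, …, a_{p+2} be nonzero elements of 𝔽_p and b_1, …, b_{p+2} ∈ 𝔽_p with at least one b_j ≠ 0. Then the system ∑_{j=1}^{p+2} a_j x_j^{p−1} = 0, ∑_{j=1}^{p+2} b_j x_j = 0 has a non-singular solution in 𝔽_p^{p+2}, i.e., a solution at which some 2×2 minor of the Jacobian matrix of the two forms is nonzero. -/

import Mathlib

open Finset

lemma sumset_card (p : ℕ) [Fact p.Prime] {ι : Type*} [DecidableEq ι] (a : ι → ZMod p)
    (U : Finset ι) (ha : ∀ j ∈ U, a j ≠ 0) :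
    min p (U.card + 1) ≤ (U.powerset.image fun T => ∑ j ∈ T, a j).card := by
  classical
  induction U using Finset.induction_on with
  | empty => simp
  | @insert u U hu ih =>
    have hau : a u ≠ 0 := ha u (mem_insert_self _ _)
    have ha' : ∀ j ∈ U, a j ≠ 0 := fun j hj => ha j (mem_insert_of_mem hj)
    have ihU := ih ha'
    set S' := U.powerset.image fun T => ∑ j ∈ T, a j with hS'
    have hsub : S' ⊆ (insert u U).powerset.image fun T => ∑ j ∈ T, a j :=
      image_subset_image (powerset_mono.2 (subset_insert _ _))
    have hmem : ∀ s ∈ S', a u + s ∈ (insert u U).powerset.image fun T => ∑ j ∈ T, a j := by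
      intro s hs
      obtain ⟨T, hT, rfl⟩ := mem_image.1 hs
      refine mem_image.2 ⟨insert u T, ?_, ?_⟩
      · exact mem_powerset.2 (insert_subset_insert _ (mem_powerset.1 hT))
      · rw [sum_insert (fun h => hu (mem_powerset.1 hT h))]
    rcases le_or_gt p S'.card with h | h
    · exact le_trans (min_le_left _ _) (le_trans h (card_le_card hsub))
    · have hgrow : S'.card + 1 ≤ ((insert u U).powerset.image fun T => ∑ j ∈ T, a j).card := by
        by_contra hcon
        push_neg at hcon
        have heq : (insert u U).powerset.image (fun T => ∑ j ∈ T, a j) = S' :=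
          (eq_of_subset_of_card_le hsub (by omega)).symm
        have hclosed : ∀ s ∈ S', a u + s ∈ S' := by
          intro s hs; rw [← heq]; exact hmem s hs
        have h0 : (0 : ZMod p) ∈ S' := mem_image.2 ⟨∅, by simp, by simp⟩
        have hk : ∀ k : ℕ, (k : ZMod p) * a u ∈ S' := by
          intro k
          induction k with
          | zero => simpa using h0
          | succ n ihn =>
            push_cast
            rw [add_mul, one_mul, add_comm]
            exact hclosed _ ihn
        have huniv : ∀ z : ZMod p, z ∈ S' := by
          intro z
          have h2 := hk (z * (a u)⁻¹).val
          rwa [ZMod.natCast_val, ZMod.cast_id, mul_assoc, inv_mul_cancel₀ hau, mul_one] at h2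
        have hcard : (Finset.univ : Finset (ZMod p)).card ≤ S'.card :=
          card_le_card fun z _ => huniv z
        rw [card_univ, ZMod.card] at hcard
        omega
      have h1 : U.card + 1 ≤ S'.card := by omega
      rw [card_insert_of_notMem hu]
      omega

lemma exists_subset_sum (p : ℕ) [Fact p.Prime] {ι : Type*} [DecidableEq ι] (a : ι → ZMod p)
    (U : Finset ι) (ha : ∀ j ∈ U, a j ≠ 0) (hU : p ≤ U.card + 1) (c : ZMod p) :
    ∃ T, T ⊆ U ∧ ∑ j ∈ T, a j = c := by
  have h1 := sumset_card p a U ha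
  rw [min_eq_left hU] at h1
  have h2 : (U.powerset.image fun T => ∑ j ∈ T, a j).card ≤ p := by
    simpa [ZMod.card] using card_le_univ (U.powerset.image fun T => ∑ j ∈ T, a j)
  have h3 : (U.powerset.image fun T => ∑ j ∈ T, a j) = Finset.univ := by
    apply eq_univ_of_card
    rw [ZMod.card]
    omega
  have : c ∈ U.powerset.image fun T => ∑ j ∈ T, a j := h3 ▸ mem_univ c
  obtain ⟨T, hT, hsum⟩ := mem_image.1 this
  exact ⟨T, mem_powerset.1 hT, hsum⟩

theorem stmt_7 (p : ℕ) (hp : p.Prime) (hp5 : 5 ≤ p)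
    (a b : Fin (p + 2) → ZMod p) (ha : ∀ j, a j ≠ 0) (hb : ∃ j, b j ≠ 0) :
    ∃ x : Fin (p + 2) → ZMod p,
      (∑ j, a j * x j ^ (p - 1)) = 0 ∧ (∑ j, b j * x j) = 0 ∧
      ∃ i j, ((p - 1 : ZMod p) * a i * x i ^ (p - 2)) * b j -
             ((p - 1 : ZMod p) * a j * x j ^ (p - 2)) * b i ≠ 0 := by
  classical
  haveI : Fact p.Prime := ⟨hp⟩
  have hp1 : ((p : ZMod p) - 1) = -1 := by rw [ZMod.natCast_self]; ring
  have hpow0 : (0 : ZMod p) ^ (p - 2) = 0 := zero_pow (by omega)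
  have hpow0' : (0 : ZMod p) ^ (p - 1) = 0 := zero_pow (by omega)
  set B := Finset.univ.filter (fun j : Fin (p+2) => b j ≠ 0) with hBdef
  obtain ⟨k, hk⟩ := hb
  have hkB : k ∈ B := by simp [hBdef, hk]
  have hcardFin : (Finset.univ : Finset (Fin (p+2))).card = p + 2 := by simp
  by_cases hB2 : B.card ≤ 2
  · -- Case 1 : few nonzero b's
    set M := Finset.univ.filter (fun j : Fin (p+2) => b j = 0) with hMdef
    have hMB : M.card + B.card = p + 2 := by
      rw [hBdef, hMdef, card_filter_add_card_filter_not (p := fun j => b j = 0)]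
      · simp
    have hM : p ≤ M.card := by omega
    obtain ⟨u0, hu0⟩ : M.Nonempty := card_pos.1 (by omega)
    obtain ⟨T, hTsub, hTsum⟩ := exists_subset_sum p a (M.erase u0) (fun j _ => ha j)
      (by rw [card_erase_of_mem hu0]; omega) (-(a u0))
    have hu0T : u0 ∉ T := fun h => (mem_erase.1 (hTsub h)).1 rfl
    set S := insert u0 T with hSdef
    have hSM : S ⊆ M := insert_subset hu0 (hTsub.trans (erase_subset _ _))
    have hSsum : ∑ j ∈ S, a j = 0 := by
      rw [hSdef, sum_insert hu0T, hTsum]; ring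
    have hkS : k ∉ S := fun h => hk ((mem_filter.1 (hSM h)).2)
    refine ⟨fun j => if j ∈ S then 1 else 0, ?_, ?_, u0, k, ?_⟩
    · rw [← Finset.sum_subset (subset_univ S)
        (fun j _ hj => by simp [hj, hpow0'])]
      calc ∑ j ∈ S, a j * (if j ∈ S then (1:ZMod p) else 0) ^ (p-1)
          = ∑ j ∈ S, a j := sum_congr rfl (fun j hj => by simp [hj])
        _ = 0 := hSsum
    · rw [← Finset.sum_subset (subset_univ S) (fun j _ hj => by simp [hj])]
      refine Finset.sum_eq_zero (fun j hj => ?_)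
      have : b j = 0 := (mem_filter.1 (hSM hj)).2
      simp [this]
    · show ((p:ZMod p) - 1) * a u0 * (if u0 ∈ S then (1:ZMod p) else 0) ^ (p-2) * b k -
        ((p:ZMod p) - 1) * a k * (if k ∈ S then (1:ZMod p) else 0) ^ (p-2) * b u0 ≠ 0
      rw [if_pos (mem_insert_self u0 T : u0 ∈ S), if_neg hkS, hp1, hpow0, one_pow]
      intro h
      apply mul_ne_zero (ha u0) hk
      linear_combination -h
  · -- Case 2 : at least three nonzero b's
    push_neg at hB2
    obtain ⟨k1, hk1B⟩ : B.Nonempty := card_pos.1 (by omega)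
    obtain ⟨k2, hk2B'⟩ : (B.erase k1).Nonempty := card_pos.1 (by rw [card_erase_of_mem hk1B]; omega)
    obtain ⟨k3, hk3B'⟩ : ((B.erase k1).erase k2).Nonempty := card_pos.1 (by
      rw [card_erase_of_mem hk2B', card_erase_of_mem hk1B]; omega)
    have hk21 : k2 ≠ k1 := (mem_erase.1 hk2B').1
    have hk32 : k3 ≠ k2 := (mem_erase.1 hk3B').1
    have hk31 : k3 ≠ k1 := (mem_erase.1 (mem_erase.1 hk3B').2).1
    have hbk1 : b k1 ≠ 0 := (mem_filter.1 hk1B).2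
    have hbk2 : b k2 ≠ 0 := (mem_filter.1 ((mem_erase.1 hk2B').2)).2
    have hbk3 : b k3 ≠ 0 := (mem_filter.1 ((mem_erase.1 (mem_erase.1 hk3B').2).2)).2
    have h2ne : ((2:ℕ) : ZMod p) ≠ 0 := by
      rw [Ne, ZMod.natCast_eq_zero_iff]
      intro h; have := Nat.le_of_dvd (by omega) h; omega
    obtain ⟨m0, m1, hm01, hbm0, hbm1, hasum⟩ :
        ∃ m0 m1 : Fin (p+2), m0 ≠ m1 ∧ b m0 ≠ 0 ∧ b m1 ≠ 0 ∧ a m0 + a m1 ≠ 0 := by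
      by_cases h12 : a k1 + a k2 ≠ 0
      · exact ⟨k1, k2, hk21.symm, hbk1, hbk2, h12⟩
      by_cases h13 : a k1 + a k3 ≠ 0
      · exact ⟨k1, k3, hk31.symm, hbk1, hbk3, h13⟩
      refine ⟨k2, k3, hk32.symm, hbk2, hbk3, ?_⟩
      push_neg at h12 h13
      intro h23
      apply ha k2
      have h2a : (2 : ZMod p) * a k2 = 0 := by linear_combination h12 + h23 - h13
      have : ((2:ℕ) : ZMod p) * a k2 = 0 := by push_cast; linear_combination h2a
      rcases mul_eq_zero.1 this with h | h
      · exact absurd h h2ne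
      · exact h
    -- find T with prescribed sum avoiding m0 m1
    obtain ⟨T, hTsub, hTsum⟩ := exists_subset_sum p a (Finset.univ \ {m0, m1})
      (fun j _ => ha j)
      (by
        rw [card_sdiff_of_subset (subset_univ _), hcardFin, card_insert_of_notMem (by simp [hm01]),
          card_singleton]
        omega)
      (-(a m0 + a m1))
    have hTne : T.Nonempty := by
      rcases T.eq_empty_or_nonempty with rfl | h
      · rw [sum_empty] at hTsum
        exact absurd hTsum.symm (neg_ne_zero.2 hasum)
      · exact h
    obtain ⟨j0, hj0T⟩ := hTne
    have hmemT : ∀ j ∈ T, j ≠ m0 ∧ j ≠ m1 := by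
      intro j hj
      have := mem_sdiff.1 (hTsub hj)
      simp only [mem_insert, mem_singleton] at this
      exact ⟨fun h => this.2 (Or.inl h), fun h => this.2 (Or.inr h)⟩
    have hm0T : m0 ∉ T := fun h => (hmemT m0 h).1 rfl
    have hm1T : m1 ∉ T := fun h => (hmemT m1 h).2 rfl
    set t := ∑ j ∈ T, b j with htdef
    set vbad1 := -t * (b m1)⁻¹ with hvbad1def
    set vbad2 := (-(a m0 * b j0) - a j0 * t) * (a j0 * b m1)⁻¹ with hvbad2def
    -- pick v among 1,2,3,4 avoiding vbad1 vbad2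
    have hcand : (Finset.image (fun n : ℕ => (n : ZMod p)) (Finset.Icc 1 4)).card = 4 := by
      rw [Finset.card_image_of_injOn, Nat.card_Icc]
      intro m hm n hn h
      simp only [Finset.mem_coe, Finset.mem_Icc] at hm hn
      have h1 := ZMod.val_cast_of_lt (show m < p by omega)
      have h2 := ZMod.val_cast_of_lt (show n < p by omega)
      have h3 := congrArg ZMod.val h
      simp only at h3
      omega
    obtain ⟨v, hv⟩ : ((Finset.image (fun n : ℕ => (n : ZMod p)) (Finset.Icc 1 4)) \
        {vbad1, vbad2}).Nonempty := by
      apply card_pos.1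
      have hle := Finset.le_card_sdiff ({vbad1, vbad2} : Finset (ZMod p))
        (Finset.image (fun n : ℕ => (n : ZMod p)) (Finset.Icc 1 4))
      have : ({vbad1, vbad2} : Finset (ZMod p)).card ≤ 2 :=
        le_trans (card_insert_le _ _) (by simp)
      omega
    rw [mem_sdiff] at hv
    obtain ⟨hvc, hvbad⟩ := hv
    have hv0 : v ≠ 0 := by
      obtain ⟨n, hn, rfl⟩ := mem_image.1 hvc
      rw [mem_Icc] at hn
      rw [Ne, ZMod.natCast_eq_zero_iff]
      intro h; have := Nat.le_of_dvd (by omega) h; omega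
    have hv1 : v ≠ vbad1 := fun h => hvbad (by simp [h])
    have hv2 : v ≠ vbad2 := fun h => hvbad (by simp [h])
    set u := -(t + b m1 * v) * (b m0)⁻¹ with hudef
    have htv : t + b m1 * v ≠ 0 := by
      intro h
      apply hv1
      have hveq : v = -t * (b m1)⁻¹ := by
        rw [eq_mul_inv_iff_mul_eq₀ hbm1]
        linear_combination h
      rw [hveq, hvbad1def]
    have hu0 : u ≠ 0 := by
      rw [hudef]
      exact mul_ne_zero (neg_ne_zero.2 htv) (inv_ne_zero hbm0)
    have heq2 : b m0 * u + b m1 * v + t = 0 := by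
      rw [hudef]
      field_simp
      ring
    set x : Fin (p+2) → ZMod p :=
      fun j => if j = m0 then u else if j = m1 then v else if j ∈ T then 1 else 0 with hxdef
    have hxm0 : x m0 = u := by simp [hxdef]
    have hxm1 : x m1 = v := by simp [hxdef, hm01.symm]
    have hxT : ∀ j ∈ T, x j = 1 := by
      intro j hj
      simp only [hxdef]
      rw [if_neg (hmemT j hj).1, if_neg (hmemT j hj).2, if_pos hj]
    have hxout : ∀ j : Fin (p+2), j ≠ m0 → j ≠ m1 → j ∉ T → x j = 0 := by
      intro j h1 h2 h3
      simp only [hxdef]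
      rw [if_neg h1, if_neg h2, if_neg h3]
    refine ⟨x, ?_, ?_, m0, j0, ?_⟩
    · rw [← Finset.sum_subset (subset_univ (insert m0 (insert m1 T)))
        (fun j _ hj => by
          simp only [mem_insert] at hj
          push_neg at hj
          rw [hxout j hj.1 hj.2.1 hj.2.2, hpow0', mul_zero])]
      rw [sum_insert (by simp [hm01, hm0T]), sum_insert hm1T]
      rw [hxm0, hxm1, ZMod.pow_card_sub_one_eq_one hu0, ZMod.pow_card_sub_one_eq_one hv0]
      have eT : ∑ j ∈ T, a j * x j ^ (p-1) = ∑ j ∈ T, a j := by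
        refine sum_congr rfl (fun j hj => ?_)
        rw [hxT j hj, one_pow, mul_one]
      rw [eT, hTsum]
      ring
    · rw [← Finset.sum_subset (subset_univ (insert m0 (insert m1 T)))
        (fun j _ hj => by
          simp only [mem_insert] at hj
          push_neg at hj
          rw [hxout j hj.1 hj.2.1 hj.2.2, mul_zero])]
      rw [sum_insert (by simp [hm01, hm0T]), sum_insert hm1T]
      rw [hxm0, hxm1]
      have eT : ∑ j ∈ T, b j * x j = ∑ j ∈ T, b j := by
        refine sum_congr rfl (fun j hj => ?_)
        rw [hxT j hj, mul_one]
      rw [eT]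
      linear_combination heq2
    · rw [hxm0, hxT j0 hj0T, hp1, one_pow]
      intro h
      have hupow : u ^ (p-2) * u = 1 := by
        rw [← pow_succ, show p - 2 + 1 = p - 1 by omega]
        exact ZMod.pow_card_sub_one_eq_one hu0
      have key : a j0 * b m0 * u = a m0 * b j0 := by
        linear_combination u * h + a m0 * b j0 * hupow
      have E3 : a m0 * b j0 + a j0 * (b m1 * v) + a j0 * t = 0 := by
        linear_combination a j0 * heq2 - key
      apply hv2
      rw [hvbad2def, eq_mul_inv_iff_mul_eq₀ (mul_ne_zero (ha j0) hbm1)]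
      linear_combination E3
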